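/- Suppose s is an even integer ≥ 4 and define T(s) = ∑_{j=s/2}^∞ ∏_{k=1}^{j} 3/(3^k − 1). Then T(s) ≤ (3^{s/2}/(3^{s/2}−1)) · ∏_{k=1}^{s/2 −1} 1/(3^k − 1) · (1 + ∑_{j=s/2+1}^∞ ∏_{k=s/2+1}^{j} 3/(3^k−1)) and consequently T(s) · ∏_{k=0}^∞ (1+3^{-k})^{-1} ≤ ∏_{k=1}^∞ (1 − 3^{-k})^{-1} · 3^{−s(s−2)/8}. -/

import Mathlib

open scoped BigOperators

section TailAux

open Finset

private lemma R_pos' {k : ℕ} (hk : 1 ≤ k) : 0 < 3 / ((3 : ℝ) ^ k - 1) := by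
  have : (3:ℝ)^1 ≤ (3:ℝ)^k := pow_le_pow_right₀ (by norm_num) hk
  apply div_pos (by norm_num)
  simp at this; linarith

private lemma R_le_half' {k : ℕ} (hk : 3 ≤ k) : 3 / ((3 : ℝ) ^ k - 1) ≤ 1/2 := by
  have : (3:ℝ)^3 ≤ (3:ℝ)^k := pow_le_pow_right₀ (by norm_num) hk
  rw [div_le_div_iff₀ (by norm_num at this ⊢; linarith) (by norm_num)]
  norm_num at this ⊢; linarith

private lemma prod_Ioc_nonneg' (m j : ℕ) : 0 ≤ ∏ k ∈ Finset.Ioc m j, 3 / ((3 : ℝ) ^ k - 1) :=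
  Finset.prod_nonneg fun k hk => (R_pos' (by have := (Finset.mem_Ioc.mp hk).1; omega)).le

private lemma prod_Ioc_le' {m j : ℕ} (hm : 2 ≤ m) (hj : m ≤ j) :
    ∏ k ∈ Finset.Ioc m j, 3 / ((3 : ℝ) ^ k - 1) ≤ 2 ^ m * (1/2) ^ j := by
  have h1 : ∏ k ∈ Finset.Ioc m j, 3 / ((3 : ℝ) ^ k - 1) ≤ ∏ _k ∈ Finset.Ioc m j, (1/2 : ℝ) := by
    apply Finset.prod_le_prod
    · intro k hk; exact (R_pos' (by have := (Finset.mem_Ioc.mp hk).1; omega)).le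
    · intro k hk; exact R_le_half' (by have := (Finset.mem_Ioc.mp hk).1; omega)
  have h2 : ∏ _k ∈ Finset.Ioc m j, (1/2 : ℝ) = (1/2) ^ (j - m) := by
    rw [Finset.prod_const, Nat.card_Ioc]
  have h3 : ((1:ℝ)/2) ^ (j - m) = 2 ^ m * (1/2) ^ j := by
    have hj' : j - m + m = j := Nat.sub_add_cancel hj
    have : ((1:ℝ)/2) ^ (j-m) * ((1/2)^m * 2^m) = 2^m * (1/2)^j := by
      rw [← mul_assoc, ← pow_add, hj']; ring
    rw [← this, ← mul_pow]; norm_num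
  rw [h2, h3] at h1; exact h1

private lemma summable_aux' {m c : ℕ} (hm : 2 ≤ m) (hc : m ≤ c) :
    Summable (fun j => if c ≤ j then ∏ k ∈ Finset.Ioc m j, 3 / ((3 : ℝ) ^ k - 1) else 0) := by
  apply Summable.of_nonneg_of_le (f := fun j => (2:ℝ) ^ m * (1/2) ^ j)
  · intro j; split
    · exact prod_Ioc_nonneg' m j
    · exact le_refl 0
  · intro j
    split
    · exact prod_Ioc_le' hm (le_trans hc (by assumption))
    · positivity
  · exact (summable_geometric_of_lt_one (by norm_num) (by norm_num)).mul_left _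

private lemma S_le_one' {m : ℕ} (hm : 2 ≤ m) :
    (∑' j : ℕ, if m + 1 ≤ j then ∏ k ∈ Finset.Ioc m j, 3 / ((3 : ℝ) ^ k - 1) else 0) ≤ 1 := by
  have hmaj : Summable (fun j => if m + 1 ≤ j then (2:ℝ) ^ m * (1/2) ^ j else 0) := by
    apply Summable.of_nonneg_of_le (f := fun j => (2:ℝ) ^ m * (1/2) ^ j)
    · intro j; split <;> positivity
    · intro j; split
      · exact le_refl _
      · positivity
    · exact (summable_geometric_of_lt_one (by norm_num) (by norm_num)).mul_left _
  have h1 : (∑' j : ℕ, if m + 1 ≤ j then ∏ k ∈ Finset.Ioc m j, 3 / ((3 : ℝ) ^ k - 1) else 0)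
      ≤ ∑' j : ℕ, if m + 1 ≤ j then (2:ℝ) ^ m * (1/2) ^ j else 0 := by
    apply Summable.tsum_le_tsum _ (summable_aux' hm (by omega)) hmaj
    intro j
    split
    · exact prod_Ioc_le' hm (by omega)
    · exact le_refl 0
  have h2 : (∑' j : ℕ, if m + 1 ≤ j then (2:ℝ) ^ m * (1/2) ^ j else 0) = 1 := by
    have := (Summable.sum_add_tsum_nat_add (f := fun j => if m + 1 ≤ j then (2:ℝ) ^ m * (1/2) ^ j else 0)
      (m+1) hmaj).symm
    rw [this]
    have hz : (∑ i ∈ Finset.range (m+1),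
        if m + 1 ≤ i then (2:ℝ) ^ m * (1/2) ^ i else 0) = 0 := by
      apply Finset.sum_eq_zero; intro i hi
      rw [if_neg]; simp at hi; omega
    rw [hz, zero_add]
    have he : (fun i => if m + 1 ≤ i + (m+1) then (2:ℝ) ^ m * (1/2) ^ (i + (m+1)) else 0)
        = fun i => ((2:ℝ)^m * (1/2)^(m+1)) * (1/2) ^ i := by
      funext i; rw [if_pos (by omega), pow_add]; ring
    rw [he, tsum_mul_left, tsum_geometric_of_lt_one (by norm_num) (by norm_num)]
    norm_num
    rw [pow_succ]
    have : ((2:ℝ)^m * ((1:ℝ)/2)^m) = 1 := by rw [← mul_pow]; norm_num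
    nlinarith [this]
  linarith

private lemma S_nonneg' (m : ℕ) :
    0 ≤ (∑' j : ℕ, if m + 1 ≤ j then ∏ k ∈ Finset.Ioc m j, 3 / ((3 : ℝ) ^ k - 1) else 0) := by
  apply tsum_nonneg; intro j; split
  · exact prod_Ioc_nonneg' m j
  · exact le_refl 0

private lemma key_eq' {m : ℕ} (hm : 2 ≤ m) :
    (∑' j : ℕ, if m ≤ j then ∏ k ∈ Finset.Icc 1 j, 3 / ((3 : ℝ) ^ k - 1) else 0)
      = (∏ k ∈ Finset.Icc 1 m, 3 / ((3 : ℝ) ^ k - 1)) *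
        (1 + ∑' j : ℕ, if m + 1 ≤ j then ∏ k ∈ Finset.Ioc m j, 3 / ((3 : ℝ) ^ k - 1) else 0) := by
  have hfact : ∀ j : ℕ, (if m ≤ j then ∏ k ∈ Finset.Icc 1 j, 3 / ((3 : ℝ) ^ k - 1) else 0)
      = (∏ k ∈ Finset.Icc 1 m, 3 / ((3 : ℝ) ^ k - 1)) *
        (if m ≤ j then ∏ k ∈ Finset.Ioc m j, 3 / ((3 : ℝ) ^ k - 1) else 0) := by
    intro j
    by_cases hj : m ≤ j
    · rw [if_pos hj, if_pos hj]
      rw [show Finset.Icc 1 j = Finset.Ioc 0 j from Finset.Icc_add_one_left_eq_Ioc 0 j,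
          show Finset.Icc 1 m = Finset.Ioc 0 m from Finset.Icc_add_one_left_eq_Ioc 0 m]
      exact (Finset.prod_Ioc_consecutive _ (by omega) hj).symm
    · rw [if_neg hj, if_neg hj, mul_zero]
  have hsplit : ∀ j : ℕ, (if m ≤ j then ∏ k ∈ Finset.Ioc m j, 3 / ((3 : ℝ) ^ k - 1) else 0)
      = (if j = m then (1:ℝ) else 0) +
        (if m + 1 ≤ j then ∏ k ∈ Finset.Ioc m j, 3 / ((3 : ℝ) ^ k - 1) else 0) := by
    intro j
    rcases lt_trichotomy j m with h | h | h
    · rw [if_neg (by omega), if_neg (by omega), if_neg (by omega)]; ring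
    · subst h
      rw [if_pos (le_refl _), if_pos rfl, if_neg (by omega), Finset.Ioc_self,
        Finset.prod_empty]; ring
    · rw [if_pos (by omega), if_neg (by omega), if_pos (by omega)]; ring
  calc (∑' j : ℕ, if m ≤ j then ∏ k ∈ Finset.Icc 1 j, 3 / ((3 : ℝ) ^ k - 1) else 0)
      = ∑' j : ℕ, (∏ k ∈ Finset.Icc 1 m, 3 / ((3 : ℝ) ^ k - 1)) *
          (if m ≤ j then ∏ k ∈ Finset.Ioc m j, 3 / ((3 : ℝ) ^ k - 1) else 0) := by
        exact tsum_congr hfact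
    _ = (∏ k ∈ Finset.Icc 1 m, 3 / ((3 : ℝ) ^ k - 1)) *
          ∑' j : ℕ, (if m ≤ j then ∏ k ∈ Finset.Ioc m j, 3 / ((3 : ℝ) ^ k - 1) else 0) :=
        tsum_mul_left
    _ = _ := by
        congr 1
        rw [tsum_congr hsplit, Summable.tsum_add (summable_of_ne_finset_zero (s := {m})
          (fun j hj => by rw [if_neg]; simpa using hj)) (summable_aux' hm (by omega)),
          tsum_ite_eq]

private lemma Pm_eq' {m : ℕ} (hm : 1 ≤ m) :
    ∏ k ∈ Finset.Icc 1 m, 3 / ((3 : ℝ) ^ k - 1)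
      = ((3:ℝ) ^ m / ((3:ℝ) ^ m - 1)) * ∏ k ∈ Finset.Icc 1 (m - 1), 1 / ((3 : ℝ) ^ k - 1) := by
  have hm1 : m - 1 + 1 = m := Nat.sub_add_cancel hm
  have h1 : ∏ k ∈ Finset.Icc 1 m, 3 / ((3 : ℝ) ^ k - 1)
      = (∏ k ∈ Finset.Icc 1 (m-1), 3 / ((3 : ℝ) ^ k - 1)) * (3 / ((3:ℝ)^m - 1)) := by
    rw [← hm1, Finset.prod_Icc_succ_top (by omega)]
    simp
  have h2 : ∏ k ∈ Finset.Icc 1 (m-1), 3 / ((3 : ℝ) ^ k - 1)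
      = 3 ^ (m-1) * ∏ k ∈ Finset.Icc 1 (m-1), 1 / ((3 : ℝ) ^ k - 1) := by
    have : ∀ k ∈ Finset.Icc 1 (m-1), 3 / ((3:ℝ)^k - 1) = 3 * (1 / ((3:ℝ)^k - 1)) := by
      intro k _; ring
    rw [Finset.prod_congr rfl this, Finset.prod_mul_distrib, Finset.prod_const, Nat.card_Icc]
    simp
  rw [h1, h2]
  have h3 : (3:ℝ) ^ (m-1) * 3 = 3 ^ m := by rw [← pow_succ, hm1]
  rw [← h3]
  ring

private lemma Pm_eq2' (m : ℕ) :
    ∏ k ∈ Finset.Icc 1 m, 3 / ((3 : ℝ) ^ k - 1)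
      = ((3:ℝ) ^ (m * (m - 1) / 2))⁻¹ * ∏ k ∈ Finset.range m, (1 - ((3:ℝ) ^ (k+1))⁻¹)⁻¹ := by
  rw [show Finset.Icc 1 m = Finset.Ico 1 (m+1) from (Finset.Ico_add_one_right_eq_Icc 1 m).symm,
    Finset.prod_Ico_eq_prod_range]
  simp only [Nat.add_sub_cancel]
  have hterm : ∀ i ∈ Finset.range m,
      3 / ((3:ℝ)^(1+i) - 1) = ((3:ℝ)⁻¹)^i * (1 - ((3:ℝ)^(i+1))⁻¹)⁻¹ := by
    intro i _
    have h1 : (1:ℝ) < 3 ^ (i+1) := one_lt_pow₀ (by norm_num) (by omega)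
    have hne : (3:ℝ)^(i+1) - 1 ≠ 0 := by linarith
    have hne2 : ((3:ℝ)^(i+1)) ≠ 0 := by positivity
    rw [add_comm 1 i]
    rw [inv_pow]
    field_simp
    ring
  rw [Finset.prod_congr rfl hterm, Finset.prod_mul_distrib,
    Finset.prod_pow_eq_pow_sum, Finset.sum_range_id, inv_pow]

private lemma multipliable_of_pos_log' {f : ℕ → ℝ} (hp : ∀ n, 0 < f n)
    (hs : Summable fun n => Real.log (f n)) : Multipliable f :=
  Real.multipliable_of_summable_log hp hs

private lemma one_le_prod_real' {f : ℕ → ℝ} (h1 : ∀ i, 1 ≤ f i) (s : Finset ℕ) :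
    1 ≤ ∏ i ∈ s, f i := by
  calc (1:ℝ) = ∏ _i ∈ s, (1:ℝ) := by rw [Finset.prod_const_one]
  _ ≤ ∏ i ∈ s, f i := Finset.prod_le_prod (fun _ _ => zero_le_one) (fun i _ => h1 i)

private lemma prod_le_tprod_real' {f : ℕ → ℝ} (hf : Multipliable f) (h1 : ∀ i, 1 ≤ f i)
    (s : Finset ℕ) : ∏ i ∈ s, f i ≤ ∏' i, f i := by
  refine ge_of_tendsto hf.hasProd (Filter.eventually_atTop.2 ⟨s, fun t hst => ?_⟩)
  calc ∏ i ∈ s, f i ≤ (∏ i ∈ t \ s, f i) * ∏ i ∈ s, f i :=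
        le_mul_of_one_le_left
          (Finset.prod_nonneg fun i _ => le_trans zero_le_one (h1 i))
          (one_le_prod_real' h1 _)
  _ = ∏ i ∈ t, f i := Finset.prod_sdiff hst

private lemma summable_log_A' : Summable fun k => Real.log (1 + ((3:ℝ)^k)⁻¹) := by
  apply Summable.of_nonneg_of_le (f := fun k => ((1:ℝ)/3)^k)
  · intro k
    apply Real.log_nonneg
    have : (0:ℝ) ≤ ((3:ℝ)^k)⁻¹ := by positivity
    linarith
  · intro k
    have hx : (0:ℝ) < ((3:ℝ)^k)⁻¹ := by positivity
    have := Real.log_le_sub_one_of_pos (x := 1 + ((3:ℝ)^k)⁻¹) (by linarith)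
    have heq : ((1:ℝ)/3)^k = ((3:ℝ)^k)⁻¹ := by rw [one_div, inv_pow]
    linarith [heq.ge, heq.le]
  · exact summable_geometric_of_lt_one (by norm_num) (by norm_num)

private lemma A_pos_val' : ∀ k : ℕ, (0:ℝ) < 1 + ((3:ℝ)^k)⁻¹ := by
  intro k; have : (0:ℝ) < ((3:ℝ)^k)⁻¹ := by positivity
  linarith

private lemma multipliable_A' : Multipliable fun k => (1 + ((3:ℝ)^k)⁻¹) :=
  multipliable_of_pos_log' A_pos_val' summable_log_A'

private lemma multipliable_Ainv' : Multipliable fun k => (1 + ((3:ℝ)^k)⁻¹)⁻¹ := by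
  apply multipliable_of_pos_log' (fun k => inv_pos.mpr (A_pos_val' k))
  simp only [Real.log_inv]
  exact summable_log_A'.neg

private lemma A_bounds' : (0:ℝ) ≤ (∏' k : ℕ, (1 + ((3:ℝ)^k)⁻¹)⁻¹) ∧
    (∏' k : ℕ, (1 + ((3:ℝ)^k)⁻¹)⁻¹) ≤ 1/2 := by
  set A := ∏' k : ℕ, (1 + ((3:ℝ)^k)⁻¹)⁻¹ with hA
  set P := ∏' k : ℕ, (1 + ((3:ℝ)^k)⁻¹) with hP
  have hP2 : (2:ℝ) ≤ P := by
    have h0 : ∀ i : ℕ, (1:ℝ) ≤ 1 + ((3:ℝ)^i)⁻¹ := by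
      intro i
      have : (0:ℝ) ≤ ((3:ℝ)^i)⁻¹ := by positivity
      linarith
    have := prod_le_tprod_real' multipliable_A' h0 {0}
    simp at this
    rw [hP]
    linarith
  have hAP : A * P = 1 := by
    have h1 : HasProd (fun k : ℕ => (1 + ((3:ℝ)^k)⁻¹)⁻¹ * (1 + ((3:ℝ)^k)⁻¹)) (A * P) :=
      multipliable_Ainv'.hasProd.mul multipliable_A'.hasProd
    have h2 : (fun k : ℕ => (1 + ((3:ℝ)^k)⁻¹)⁻¹ * (1 + ((3:ℝ)^k)⁻¹)) = fun _ => (1:ℝ) := by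
      funext k; exact inv_mul_cancel₀ (A_pos_val' k).ne'
    rw [h2] at h1
    exact h1.unique hasProd_one
  have hPpos : (0:ℝ) < P := by linarith
  have hAval : A = P⁻¹ := by
    field_simp at hAP ⊢
    linarith [hAP]
  constructor
  · rw [hAval]; positivity
  · rw [hAval]
    rw [inv_le_comm₀ hPpos (by norm_num)]
    linarith

private lemma x_bounds' (k : ℕ) : (0:ℝ) < ((3:ℝ)^(k+1))⁻¹ ∧ ((3:ℝ)^(k+1))⁻¹ ≤ 1/3 := by
  constructor
  · positivity
  · rw [show (1:ℝ)/3 = ((3:ℝ)^1)⁻¹ by norm_num]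
    exact inv_anti₀ (by norm_num) (pow_le_pow_right₀ (by norm_num) (by omega))

private lemma summable_log_B' : Summable fun k => Real.log ((1 - ((3:ℝ)^(k+1))⁻¹)⁻¹) := by
  apply Summable.of_nonneg_of_le (f := fun k => (3/2) * ((1:ℝ)/3)^(k+1))
  · intro k
    obtain ⟨h1, h2⟩ := x_bounds' k
    apply Real.log_nonneg
    rw [le_inv_comm₀ (by norm_num) (by linarith)]
    linarith
  · intro k
    obtain ⟨h1, h2⟩ := x_bounds' k
    set x := ((3:ℝ)^(k+1))⁻¹
    have hpos : (0:ℝ) < 1 - x := by linarith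
    have hlog := Real.log_le_sub_one_of_pos (x := (1 - x)⁻¹) (by positivity)
    have hle : (1 - x)⁻¹ ≤ 3/2 := by
      rw [inv_le_comm₀ hpos (by norm_num)]
      linarith
    have hinv : (1 - x) * (1 - x)⁻¹ = 1 := mul_inv_cancel₀ hpos.ne'
    have hxy : x * (1 - x)⁻¹ ≤ x * (3/2) := mul_le_mul_of_nonneg_left hle h1.le
    have heq : ((1:ℝ)/3)^(k+1) = x := by rw [one_div, inv_pow]
    rw [heq]
    nlinarith [hlog, hinv, hxy]
  · have heq2 : (fun k : ℕ => (3/2) * ((1:ℝ)/3)^(k+1))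
        = fun k : ℕ => ((3/2)*((1:ℝ)/3)) * ((1:ℝ)/3)^k := by
      funext k; rw [pow_succ']; ring
    rw [heq2]
    exact (summable_geometric_of_lt_one (by norm_num) (by norm_num)).mul_left _

private lemma one_le_Bval' (k : ℕ) : (1:ℝ) ≤ (1 - ((3:ℝ)^(k+1))⁻¹)⁻¹ := by
  obtain ⟨h1, h2⟩ := x_bounds' k
  rw [le_inv_comm₀ (by norm_num) (by linarith)]
  linarith

private lemma multipliable_B' : Multipliable fun k => (1 - ((3:ℝ)^(k+1))⁻¹)⁻¹ := by
  apply multipliable_of_pos_log'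
  · intro k
    obtain ⟨h1, h2⟩ := x_bounds' k
    have : (0:ℝ) < 1 - ((3:ℝ)^(k+1))⁻¹ := by linarith
    positivity
  · exact summable_log_B'

end TailAux

/-- The tail sum T(s) = ∑_{j = s/2}^∞ ∏_{k=1}^{j} 3/(3^k - 1). -/
noncomputable def tailT (s : ℕ) : ℝ :=
  ∑' j : ℕ, if s / 2 ≤ j then ∏ k ∈ Finset.Icc 1 j, 3 / ((3 : ℝ) ^ k - 1) else 0

/-- For even s ≥ 4:
T(s) ≤ (3^{s/2}/(3^{s/2}-1)) · ∏_{k=1}^{s/2-1} 1/(3^k-1) ·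
       (1 + ∑_{j=s/2+1}^∞ ∏_{k=s/2+1}^{j} 3/(3^k-1)),
and consequently T(s) · ∏_{k=0}^∞ (1+3^{-k})⁻¹ ≤ ∏_{k=1}^∞ (1-3^{-k})⁻¹ · 3^{-s(s-2)/8}. -/
theorem tail_sum_bound (s : ℕ) (hs : Even s) (hs4 : 4 ≤ s) :
    tailT s ≤
      ((3 : ℝ) ^ (s / 2) / ((3 : ℝ) ^ (s / 2) - 1)) *
        (∏ k ∈ Finset.Icc 1 (s / 2 - 1), 1 / ((3 : ℝ) ^ k - 1)) *
        (1 + ∑' j : ℕ, if s / 2 + 1 ≤ j then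
          ∏ k ∈ Finset.Icc (s / 2 + 1) j, 3 / ((3 : ℝ) ^ k - 1) else 0) ∧
    tailT s * (∏' k : ℕ, (1 + ((3 : ℝ) ^ k)⁻¹)⁻¹) ≤
      (∏' k : ℕ, (1 - ((3 : ℝ) ^ (k + 1))⁻¹)⁻¹) * ((3 : ℝ) ^ (s * (s - 2) / 8))⁻¹ := by
  have hm2 : 2 ≤ s / 2 := by omega
  have hIcc : ∀ j : ℕ, Finset.Icc (s / 2 + 1) j = Finset.Ioc (s / 2) j := fun j =>
    Finset.Icc_add_one_left_eq_Ioc _ _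
  simp only [hIcc]
  have hkey := key_eq' hm2
  have htailT : tailT s = (∏ k ∈ Finset.Icc 1 (s/2), 3 / ((3 : ℝ) ^ k - 1)) *
      (1 + ∑' j : ℕ, if s/2 + 1 ≤ j then
        ∏ k ∈ Finset.Ioc (s/2) j, 3 / ((3 : ℝ) ^ k - 1) else 0) := by
    rw [tailT]; exact hkey
  constructor
  · rw [htailT, Pm_eq' (by omega)]
  · set S := ∑' j : ℕ, if s/2 + 1 ≤ j then
      ∏ k ∈ Finset.Ioc (s/2) j, 3 / ((3 : ℝ) ^ k - 1) else 0 with hSdef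
    have hS1 : S ≤ 1 := S_le_one' hm2
    have hS0 : (0:ℝ) ≤ S := S_nonneg' (s/2)
    obtain ⟨hA0, hA2⟩ := A_bounds'
    have hPmnn : (0:ℝ) ≤ ∏ k ∈ Finset.Icc 1 (s/2), 3 / ((3 : ℝ) ^ k - 1) :=
      Finset.prod_nonneg fun k hk =>
        (R_pos' (Finset.mem_Icc.mp hk).1).le
    have hle1 : (1 + S) * (∏' k : ℕ, (1 + ((3 : ℝ) ^ k)⁻¹)⁻¹) ≤ 1 := by
      calc (1 + S) * (∏' k : ℕ, (1 + ((3 : ℝ) ^ k)⁻¹)⁻¹) ≤ 2 * (1/2) := by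
            apply mul_le_mul (by linarith) hA2 hA0 (by norm_num)
      _ = 1 := by norm_num
    have hBle := prod_le_tprod_real' multipliable_B' one_le_Bval' (Finset.range (s/2))
    have he : s * (s - 2) / 8 = (s/2) * (s/2 - 1) / 2 := by
      obtain ⟨m, rfl⟩ : ∃ m, s = 2*m := by obtain ⟨t, ht⟩ := hs; exact ⟨t, by omega⟩
      have hm' : 2*m/2 = m := by omega
      rw [hm']
      have h2 : 2*m - 2 = 2*(m-1) := by omega
      rw [h2, show 2*m*(2*(m-1)) = 4*(m*(m-1)) by ring]
      generalize m*(m-1) = x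
      omega
    calc tailT s * (∏' k : ℕ, (1 + ((3 : ℝ) ^ k)⁻¹)⁻¹)
        = (∏ k ∈ Finset.Icc 1 (s/2), 3 / ((3 : ℝ) ^ k - 1)) *
          ((1 + S) * (∏' k : ℕ, (1 + ((3 : ℝ) ^ k)⁻¹)⁻¹)) := by rw [htailT]; ring
      _ ≤ (∏ k ∈ Finset.Icc 1 (s/2), 3 / ((3 : ℝ) ^ k - 1)) * 1 :=
          mul_le_mul_of_nonneg_left hle1 hPmnn
      _ = ((3:ℝ) ^ ((s/2) * (s/2 - 1) / 2))⁻¹ *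
          ∏ k ∈ Finset.range (s/2), (1 - ((3:ℝ) ^ (k+1))⁻¹)⁻¹ := by
          rw [mul_one, Pm_eq2']
      _ ≤ ((3:ℝ) ^ ((s/2) * (s/2 - 1) / 2))⁻¹ *
          (∏' k : ℕ, (1 - ((3 : ℝ) ^ (k + 1))⁻¹)⁻¹) := by
          apply mul_le_mul_of_nonneg_left hBle (by positivity)
      _ = (∏' k : ℕ, (1 - ((3 : ℝ) ^ (k + 1))⁻¹)⁻¹) * ((3 : ℝ) ^ (s * (s - 2) / 8))⁻¹ := by
          rw [he]; ring
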